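/- Let s ≥ 2 be an integer, let P be the path graph on s + 1 vertices (i.e., with s edges) and endpoints a and b, and let i ∈ ZMod (2s+1). Then for c ∈ ZMod (2s+1), there exists a C_{2s+1}-coloring h of P with h(a) = i and h(b) = c if and only if c = i + s − 2j in ZMod (2s+1) for some integer j with 0 ≤ j ≤ s. -/

import Mathlib

/-- The cycle `C_k` on vertex set `ZMod k`: distinct vertices `u, v` are adjacent
iff `u - v = 1` or `v - u = 1`. -/
def cycleZMod (k : ℕ) : SimpleGraph (ZMod k) where
  Adj u v := u ≠ v ∧ (u - v = 1 ∨ v - u = 1)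
  symm := by
    constructor
    intro u v h
    exact ⟨h.1.symm, h.2.symm⟩
  loopless := by
    constructor
    intro u h
    exact h.1 rfl

/-- Let `s ≥ 2`, let `P` be the path on `s + 1` vertices (with `s` edges) with endpoints
`a` and `b`, and let `i ∈ ZMod (2s+1)`. For `c ∈ ZMod (2s+1)` there is a `C_{2s+1}`-coloring
`h` of `P` with `h a = i` and `h b = c` iff `c = i + s - 2j` for some integer `0 ≤ j ≤ s`. -/
theorem stmt11 (s : ℕ) (hs : 2 ≤ s) (i c : ZMod (2 * s + 1)) :
    (∃ h : SimpleGraph.pathGraph (s + 1) →g cycleZMod (2 * s + 1),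
        h 0 = i ∧ h (Fin.last s) = c) ↔
      ∃ j : ℕ, j ≤ s ∧
        c = i + (s : ZMod (2 * s + 1)) - 2 * (j : ZMod (2 * s + 1)) := by
  haveI : Fact (1 < 2 * s + 1) := ⟨by omega⟩
  have hone : (1 : ZMod (2 * s + 1)) ≠ 0 := one_ne_zero
  constructor
  · rintro ⟨h, h0, hb⟩
    have key : ∀ t : ℕ, ∀ ht : t ≤ s, ∃ j : ℕ, j ≤ t ∧
        h ⟨t, by omega⟩ = i + (t : ZMod (2 * s + 1)) - 2 * (j : ZMod (2 * s + 1)) := by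
      intro t
      induction t with
      | zero =>
        intro _
        refine ⟨0, le_rfl, ?_⟩
        have : h ⟨0, by omega⟩ = i := h0
        rw [this]; push_cast; ring
      | succ t ih =>
        intro ht
        obtain ⟨j, hj, hval⟩ := ih (by omega)
        have hadj : (SimpleGraph.pathGraph (s + 1)).Adj ⟨t, by omega⟩ ⟨t + 1, by omega⟩ := by
          rw [SimpleGraph.pathGraph_adj]; left; rfl
        have hstep := (h.map_rel hadj).2
        rcases hstep with hdn | hup
        · refine ⟨j + 1, by omega, ?_⟩
          have he : h ⟨t + 1, by omega⟩ = h ⟨t, by omega⟩ - 1 := by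
            linear_combination -hdn
          rw [he, hval]; push_cast; ring
        · refine ⟨j, by omega, ?_⟩
          have he : h ⟨t + 1, by omega⟩ = h ⟨t, by omega⟩ + 1 := by
            linear_combination hup
          rw [he, hval]; push_cast; ring
    obtain ⟨j, hj, hval⟩ := key s le_rfl
    exact ⟨j, hj, by rw [← hb]; exact hval⟩
  · rintro ⟨j, hj, hc⟩
    set g : ℕ → ℤ := fun t => if t ≤ s - j then (t : ℤ) else 2 * (s - j : ℕ) - t with hg
    have hdiff : ∀ t : ℕ, t < s → g (t + 1) - g t = 1 ∨ g (t + 1) - g t = -1 := by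
      intro t ht
      simp only [hg]
      rcases le_or_gt (t + 1) (s - j) with h1 | h1
      · rw [if_pos h1, if_pos (by omega)]; left; push_cast; ring
      · rw [if_neg (by omega)]
        rcases le_or_gt t (s - j) with h2 | h2
        · rw [if_pos h2]
          right
          have : t = s - j := by omega
          push_cast [this]; ring
        · rw [if_neg (by omega)]; right; push_cast; ring
    have hadjf : ∀ t : ℕ, t < s →
        (cycleZMod (2 * s + 1)).Adj (i + (g t : ZMod (2 * s + 1)))
          (i + (g (t + 1) : ZMod (2 * s + 1))) := by
      intro t ht
      have hd := hdiff t ht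
      constructor
      · intro heq
        have : ((g (t + 1) - g t : ℤ) : ZMod (2 * s + 1)) = 0 := by
          push_cast
          linear_combination -heq
        rcases hd with h | h <;> rw [h] at this <;> push_cast at this
        · exact hone this
        · exact hone (by linear_combination -this)
      · rcases hd with h | h
        · right
          have : ((g (t + 1) - g t : ℤ) : ZMod (2 * s + 1)) = 1 := by rw [h]; push_cast; ring
          push_cast at this
          linear_combination this
        · left
          have : ((g (t + 1) - g t : ℤ) : ZMod (2 * s + 1)) = -1 := by rw [h]; push_cast; ring
          push_cast at this
          linear_combination -this
    refine ⟨⟨fun t => i + (g t.val : ZMod (2 * s + 1)), ?_⟩, ?_, ?_⟩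
    · intro u v huv
      rw [SimpleGraph.pathGraph_adj] at huv
      have hu := u.isLt
      have hv := v.isLt
      rcases huv with h1 | h1
      · have := hadjf u.val (by omega)
        rw [h1] at this
        exact this
      · have := hadjf v.val (by omega)
        rw [h1] at this
        exact this.symm
    · show i + (g (0 : Fin (s + 1)).val : ZMod (2 * s + 1)) = i
      have : g 0 = 0 := by simp [hg]
      rw [Fin.val_zero, this]; push_cast; ring
    · show i + (g (Fin.last s).val : ZMod (2 * s + 1)) = c
      rw [Fin.val_last, hc]
      rcases Nat.eq_zero_or_pos j with hj0 | hj0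
      · have : g s = s := by simp [hg, hj0]
        rw [this, hj0]; push_cast; ring
      · have : g s = 2 * (s - j : ℕ) - s := by
          rw [hg]; simp only []; rw [if_neg (by omega)]
        rw [this]
        have hcast : ((s - j : ℕ) : ℤ) = (s : ℤ) - j := by omega
        push_cast [hcast]
        ring
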